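/- If some woman is strictly better-off under a matching N than under the men-proposing Gale-Shapley matching O (judged by true preferences), and N(w) = m, then m is strictly worse-off under N than under O; i.e., every woman who gains is matched under N to a man who loses. -/

import Mathlib

namespace GS

/-- The `k` most-preferred elements of `S` according to the rank function `rank`
(lower rank = more preferred); if `S` has at most `k` elements this is all of `S`. -/
def topk {α : Type*} [DecidableEq α] (rank : α → ℕ) (k : ℕ) (S : Finset α) : Finset α :=
  S.filter fun a => (S.filter fun b => rank b < rank a).card < k

/-- An instance of the stable-matching problem with `n` women and `n` men.
`mpref m w` is the rank man `m` assigns to woman `w` (lower = more preferred),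
and `wpref w m` is the rank woman `w` assigns to man `m`. -/
structure Instance (n : ℕ) where
  mpref : Fin n → Fin n → ℕ
  wpref : Fin n → Fin n → ℕ
  mprefInj : ∀ m, Function.Injective (mpref m)
  wprefInj : ∀ w, Function.Injective (wpref w)

variable {n : ℕ}

/-- `prefers p a b` : `a` is strictly preferred to `b` under rank function `p`. -/
def prefers (p : Fin n → ℕ) (a b : Fin n) : Prop := p a < p b

/-- Given the current state `avail m` (the women who have not yet rejected man `m`),
the set of women man `m` proposes to tonight: his most-preferred available woman
(a singleton, or empty if no woman is available). -/
def proposals (I : Instance n) (avail : Fin n → Finset (Fin n)) (m : Fin n) :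
    Finset (Fin n) := topk (I.mpref m) 1 (avail m)

/-- The men proposing to woman `w` tonight. -/
def proposersOf (I : Instance n) (avail : Fin n → Finset (Fin n)) (w : Fin n) :
    Finset (Fin n) := Finset.univ.filter fun m => w ∈ proposals I avail m

/-- The men rejected by woman `w` tonight: all of tonight's proposers except
her most-preferred one. -/
def rejectedBy (I : Instance n) (avail : Fin n → Finset (Fin n)) (w : Fin n) :
    Finset (Fin n) := proposersOf I avail w \ topk (I.wpref w) 1 (proposersOf I avail w)

/-- One night of the men-proposing Gale-Shapley algorithm. -/
def step (I : Instance n) (avail : Fin n → Finset (Fin n)) :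
    Fin n → Finset (Fin n) :=
  fun m => (avail m).filter fun w => m ∉ rejectedBy I avail w

/-- `nights I t m` : the set of women who have not rejected man `m` before night `t`
(initially all women). -/
def nights (I : Instance n) (t : ℕ) : Fin n → Finset (Fin n) :=
  (step I)^[t] (fun _ => Finset.univ)

/-- The algorithm has terminated by night `T`: no man is rejected on night `T`. -/
def Stopped (I : Instance n) (T : ℕ) : Prop := step I (nights I T) = nights I T

/-- On night `T`, each man `m` serenades exactly under the window of `μ m`. -/
def MatchesAt (I : Instance n) (T : ℕ) (μ : Fin n ≃ Fin n) : Prop :=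
  ∀ m, proposals I (nights I T) m = {μ m}

/-- The bijection `μ` (from men to women) is the outcome of the men-proposing
Gale-Shapley algorithm on instance `I`: for some night `T` no rejection occurs and
every man `m` is matched with `μ m`. -/
def IsGSMatching (I : Instance n) (μ : Fin n ≃ Fin n) : Prop :=
  ∃ T, Stopped I T ∧ MatchesAt I T μ

/-- Stability of a matching `μ` (men to women): there is no unmatched pair `(w, m)`
each of whom strictly prefers the other to their partner under `μ`. -/
def Stable (I : Instance n) (μ : Fin n ≃ Fin n) : Prop :=
  ¬ ∃ m w, μ m ≠ w ∧ I.mpref m w < I.mpref m (μ m) ∧ I.wpref w m < I.wpref w (μ.symm w)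

/-- The instance in which the women in `L` replace their true preferences by the
false preference rankings `f`, everyone else being truthful. -/
def liarInstance (I : Instance n) (L : Finset (Fin n))
    (f : Fin n → Fin n → ℕ) (hf : ∀ w, Function.Injective (f w)) : Instance n where
  mpref := I.mpref
  wpref := fun w => if w ∈ L then f w else I.wpref w
  mprefInj := I.mprefInj
  wprefInj := fun w => by split_ifs; exacts [hf w, I.wprefInj w]

end GS

namespace GS

variable {n : ℕ}

lemma mem_topk_one {α : Type*} [DecidableEq α] {rank : α → ℕ} {S : Finset α} {a : α} :
    a ∈ topk rank 1 S ↔ a ∈ S ∧ ∀ b ∈ S, ¬ rank b < rank a := by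
  simp [topk, Nat.lt_one_iff, Finset.card_eq_zero, Finset.filter_eq_empty_iff]

lemma topk_one_nonempty {α : Type*} [DecidableEq α] (rank : α → ℕ) {S : Finset α}
    (hS : S.Nonempty) : (topk rank 1 S).Nonempty := by
  obtain ⟨a, ha, hmin⟩ := Finset.exists_min_image S rank hS
  exact ⟨a, mem_topk_one.2 ⟨ha, fun b hb => not_lt.2 (hmin b hb)⟩⟩

lemma step_subset (I : Instance n) (avail : Fin n → Finset (Fin n)) (m : Fin n) :
    step I avail m ⊆ avail m := Finset.filter_subset _ _

lemma nights_succ (I : Instance n) (t : ℕ) :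
    nights I (t + 1) = step I (nights I t) := Function.iterate_succ_apply' _ _ _

lemma keep_proposer (I : Instance n) (avail : Fin n → Finset (Fin n)) (w m' : Fin n)
    (h2 : m' ∈ topk (I.wpref w) 1 (proposersOf I avail w)) :
    m' ∈ proposersOf I (step I avail) w := by
  have h1 : m' ∈ proposersOf I avail w := (mem_topk_one.1 h2).1
  have hp : w ∈ proposals I avail m' := (Finset.mem_filter.1 h1).2
  rw [proposals] at hp
  obtain ⟨hw_avail, hmin⟩ := mem_topk_one.1 hp
  have hnot_rej : m' ∉ rejectedBy I avail w := by
    rw [rejectedBy]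
    intro hmem
    exact (Finset.mem_sdiff.1 hmem).2 h2
  have hw_step : w ∈ step I avail m' := by
    rw [step]
    exact Finset.mem_filter.2 ⟨hw_avail, hnot_rej⟩
  refine Finset.mem_filter.2 ⟨Finset.mem_univ _, ?_⟩
  rw [proposals]
  exact mem_topk_one.2 ⟨hw_step, fun b hb => hmin b (step_subset I avail m' hb)⟩

lemma invariant_step (I : Instance n) (t : ℕ) (w m : Fin n)
    (h : ∃ m' ∈ proposersOf I (nights I t) w, I.wpref w m' < I.wpref w m) :
    ∃ m' ∈ proposersOf I (nights I (t + 1)) w, I.wpref w m' < I.wpref w m := by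
  obtain ⟨m', hm', hlt⟩ := h
  obtain ⟨m'', hm''⟩ := topk_one_nonempty (I.wpref w) ⟨m', hm'⟩
  refine ⟨m'', ?_, ?_⟩
  · rw [nights_succ]
    exact keep_proposer I _ w m'' hm''
  · obtain ⟨_, hmin⟩ := mem_topk_one.1 hm''
    exact lt_of_le_of_lt (not_lt.1 (hmin m' hm')) hlt

end GS

open GS in
/-- Every woman who is strictly better-off under a matching `N` than under the
men-proposing Gale-Shapley matching `O` is matched under `N` to a man who is
strictly worse-off. -/
theorem better_off_woman_matched_to_worse_off_man (n : ℕ) (I : GS.Instance n)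
    (O : Fin n ≃ Fin n) (hO : IsGSMatching I O)
    (N : Fin n ≃ Fin n) (w m : Fin n) (hm : N.symm w = m)
    (hbetter : prefers (I.wpref w) m (O.symm w)) :
    prefers (I.mpref m) (O m) (N m) := by
  -- Setup
  obtain ⟨T, hStop, hMatch⟩ := hO
  have hNm : N m = w := by rw [← hm]; exact N.apply_symm_apply w
  rw [prefers, hNm]
  by_contra hcon
  push_neg at hcon
  -- m ≠ O.symm w, so O m ≠ w
  have hmne : m ≠ O.symm w := by
    intro h; rw [h] at hbetter; exact lt_irrefl _ hbetter
  have hOmw : O m ≠ w := by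
    intro h; exact hmne (by rw [← h, O.symm_apply_apply])
  -- m strictly prefers w to O m
  have hmw : I.mpref m w < I.mpref m (O m) :=
    lt_of_le_of_ne hcon (fun h => hOmw (I.mprefInj m h.symm))
  -- O m is m's top available woman at night T
  have hOprop : O m ∈ proposals I (nights I T) m := by
    rw [hMatch m]; exact Finset.mem_singleton_self _
  rw [proposals] at hOprop
  obtain ⟨hOavail, hOmin⟩ := GS.mem_topk_one.1 hOprop
  -- hence w is not available to m at night T
  have hwT : w ∉ nights I T m := fun hw => hOmin w hw hmw
  -- find the rejection night
  have hex : ∃ t, w ∉ nights I t m := ⟨T, hwT⟩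
  classical
  have htpos : Nat.find hex ≠ 0 := by
    intro h0
    have := Nat.find_spec hex
    rw [h0] at this
    exact this (by simp [GS.nights])
  obtain ⟨s, hs⟩ := Nat.exists_eq_succ_of_ne_zero htpos
  have hws : w ∈ nights I s m := by
    by_contra hc
    have : Nat.find hex ≤ s := Nat.find_le (h := hex) hc
    omega
  have hws1 : w ∉ nights I (s + 1) m := by
    have h := Nat.find_spec hex
    rw [hs] at h
    exact h
  have hsT : s ≤ T := by
    have : Nat.find hex ≤ T := Nat.find_le (h := hex) hwT
    omega
  -- m was rejected by w on night s
  have hrej : m ∈ rejectedBy I (nights I s) w := by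
    by_contra hc
    apply hws1
    rw [GS.nights_succ, GS.step]
    exact Finset.mem_filter.2 ⟨hws, hc⟩
  rw [rejectedBy, Finset.mem_sdiff] at hrej
  obtain ⟨hprop, hntop⟩ := hrej
  -- so there is a proposer to w on night s whom w prefers to m
  have hQs : ∃ m' ∈ proposersOf I (nights I s) w, I.wpref w m' < I.wpref w m := by
    by_contra hc
    push_neg at hc
    exact hntop (GS.mem_topk_one.2 ⟨hprop, fun b hb => not_lt.2 (hc b hb)⟩)
  -- the invariant propagates to all later nights
  have hQ : ∀ k, ∃ m' ∈ proposersOf I (nights I (s + k)) w, I.wpref w m' < I.wpref w m := by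
    intro k
    induction k with
    | zero => exact hQs
    | succ k ih => exact GS.invariant_step I (s + k) w m ih
  have hQT : ∃ m' ∈ proposersOf I (nights I T) w, I.wpref w m' < I.wpref w m := by
    have := hQ (T - s)
    rwa [Nat.add_sub_cancel' hsT] at this
  obtain ⟨m', hm', hlt⟩ := hQT
  -- but at night T every proposer to w is O.symm w
  have hpm' : w ∈ proposals I (nights I T) m' := (Finset.mem_filter.1 hm').2
  rw [hMatch m', Finset.mem_singleton] at hpm'
  have : m' = O.symm w := by rw [hpm', O.symm_apply_apply]
  rw [this] at hlt
  exact absurd hbetter (not_lt.2 (le_of_lt hlt))
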